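/- Let Λ ⊆ ℝ^d be compact with f(Λ) = Λ, and let (E, F) be maps assigning to each x ∈ Λ linear subspaces with ℝ^d = E(x) ⊕ F(x), Df-invariant (Df_x(E(x)) = E(f(x)), Df_x(F(x)) = F(f(x))), and satisfying the domination inequality with constants C > 0, λ ∈ (0,1) (continuity not assumed). Then the angle between E and F is bounded away from zero: there exists c > 0 such that for every x ∈ Λ and all nonzero u ∈ E(x), v ∈ F(x), ‖u + v‖ ≥ c·(‖u‖ + ‖v‖). -/

import Mathlib

open Set

noncomputable section

abbrev Euc (d : ℕ) := EuclideanSpace ℝ (Fin d)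

/-- f is a C¹ diffeomorphism of ℝ^d. -/
def IsC1Diffeo {d : ℕ} (f : Euc d → Euc d) : Prop :=
  Function.Bijective f ∧ ContDiff ℝ 1 f ∧
    ∃ g : Euc d → Euc d, ContDiff ℝ 1 g ∧ Function.LeftInverse g f ∧ Function.RightInverse g f

/-- The orthogonal projection onto V, as an endomorphism. -/
def projSub {d : ℕ} (V : Submodule ℝ (Euc d)) : Euc d →L[ℝ] Euc d :=
  V.subtypeL.comp (Submodule.orthogonalProjectionOnto V)

/-- The domination inequality. -/
def DomIneq {d : ℕ} (f : Euc d → Euc d) (Λ : Set (Euc d))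
    (E F : Euc d → Submodule ℝ (Euc d)) (C lam : ℝ) : Prop :=
  ∀ x ∈ Λ, ∀ n : ℕ, ∀ u ∈ E x, u ≠ 0 → ∀ v ∈ F x, v ≠ 0 →
    ‖fderiv ℝ (f^[n]) x u‖ / ‖u‖ ≤ C * lam ^ n * (‖fderiv ℝ (f^[n]) x v‖ / ‖v‖)

/-- Dominated splitting on Λ with constants C, lam. -/
def IsDomSplitting {d : ℕ} (f : Euc d → Euc d) (Λ : Set (Euc d))
    (E F : Euc d → Submodule ℝ (Euc d)) (C lam : ℝ) : Prop :=
  (∀ x ∈ Λ, IsCompl (E x) (F x)) ∧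
  (∀ x ∈ Λ, (E x).map (fderiv ℝ f x : Euc d →ₗ[ℝ] Euc d) = E (f x)) ∧
  (∀ x ∈ Λ, (F x).map (fderiv ℝ f x : Euc d →ₗ[ℝ] Euc d) = F (f x)) ∧
  ContinuousOn (fun x => projSub (E x)) Λ ∧
  ContinuousOn (fun x => projSub (F x)) Λ ∧
  DomIneq f Λ E F C lam

private lemma contDiff_iter {d : ℕ} {f : Euc d → Euc d} (hf : ContDiff ℝ 1 f) (n : ℕ) :
    ContDiff ℝ 1 (f^[n]) := by
  induction n with
  | zero => simpa using contDiff_id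
  | succ n ih => rw [Function.iterate_succ']; exact hf.comp ih

private lemma compact_bound {d : ℕ} {s : Set (Euc d)} (hs : IsCompact s)
    {Y : Type*} [NormedAddCommGroup Y] (h : Euc d → Y) (hc : Continuous h) :
    ∃ M : ℝ, 1 ≤ M ∧ ∀ x ∈ s, ‖h x‖ ≤ M := by
  obtain ⟨M, hM⟩ := (hs.image (continuous_norm.comp hc)).bddAbove
  exact ⟨max M 1, le_max_right _ _, fun x hx =>
    le_trans (hM (Set.mem_image_of_mem _ hx)) (le_max_left _ _)⟩

/-- For a dominated splitting (continuity not assumed) on a compact invariant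
set, the angle between the two subbundles is bounded away from zero. -/
theorem dominated_splitting_angle_bounded
    {d : ℕ} (hd : 1 ≤ d) (f : Euc d → Euc d) (hf : IsC1Diffeo f)
    (Λ : Set (Euc d)) (hΛ : IsCompact Λ) (hinv : f '' Λ = Λ)
    (E F : Euc d → Submodule ℝ (Euc d))
    (hcompl : ∀ x ∈ Λ, IsCompl (E x) (F x))
    (hEinv : ∀ x ∈ Λ, (E x).map (fderiv ℝ f x : Euc d →ₗ[ℝ] Euc d) = E (f x))
    (hFinv : ∀ x ∈ Λ, (F x).map (fderiv ℝ f x : Euc d →ₗ[ℝ] Euc d) = F (f x))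
    (C lam : ℝ) (hC : 0 < C) (hlam0 : 0 < lam) (hlam1 : lam < 1)
    (hdom : DomIneq f Λ E F C lam) :
    ∃ c > (0:ℝ), ∀ x ∈ Λ, ∀ u ∈ E x, u ≠ 0 → ∀ v ∈ F x, v ≠ 0 →
      ‖u + v‖ ≥ c * (‖u‖ + ‖v‖) := by
  obtain ⟨hbij, hfc, g, hgc, hgl, hgr⟩ := hf
  -- choose n with C * lam ^ n ≤ 1/4
  obtain ⟨n, hn⟩ : ∃ n : ℕ, C * lam ^ n ≤ 1 / 4 := by
    obtain ⟨n, hn⟩ := exists_pow_lt_of_lt_one (x := 1 / (4 * C)) (by positivity) hlam1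
    refine ⟨n, ?_⟩
    have h4C : (0:ℝ) < 4 * C := by positivity
    calc C * lam ^ n ≤ C * (1 / (4 * C)) := by
          exact mul_le_mul_of_nonneg_left hn.le hC.le
      _ = 1 / 4 := by field_simp
  -- smoothness of the iterates
  have hfn : ContDiff ℝ 1 (f^[n]) := contDiff_iter hfc n
  have hgn : ContDiff ℝ 1 (g^[n]) := contDiff_iter hgc n
  -- invariance of Λ under f^[n]
  have hiter_inv : f^[n] '' Λ = Λ := by
    have : ∀ m : ℕ, f^[m] '' Λ = Λ := by
      intro m
      induction m with
      | zero => simp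
      | succ m ih => rw [Function.iterate_succ', Set.image_comp, ih, hinv]
    exact this n
  -- bounds on the derivatives over Λ
  obtain ⟨M₁, hM₁1, hM₁⟩ := compact_bound hΛ (fun x => fderiv ℝ (f^[n]) x)
    (hfn.continuous_fderiv one_ne_zero)
  obtain ⟨M₂, hM₂1, hM₂⟩ := compact_bound hΛ (fun x => fderiv ℝ (g^[n]) x)
    (hgn.continuous_fderiv one_ne_zero)
  have hM₁0 : (0:ℝ) < M₁ := lt_of_lt_of_le one_pos hM₁1
  have hM₂0 : (0:ℝ) < M₂ := lt_of_lt_of_le one_pos hM₂1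
  -- chain rule : D(g^[n]) ∘ D(f^[n]) = id
  have hchain : ∀ x : Euc d, ∀ w : Euc d,
      fderiv ℝ (g^[n]) (f^[n] x) (fderiv ℝ (f^[n]) x w) = w := by
    intro x w
    have hid : g^[n] ∘ f^[n] = id := ((hgl.iterate n).comp_eq_id)
    have h1 : fderiv ℝ (g^[n] ∘ f^[n]) x =
        (fderiv ℝ (g^[n]) (f^[n] x)).comp (fderiv ℝ (f^[n]) x) :=
      fderiv_comp x (hgn.differentiable one_ne_zero _) (hfn.differentiable one_ne_zero _)
    have h2 : fderiv ℝ (g^[n] ∘ f^[n]) x = ContinuousLinearMap.id ℝ (Euc d) := by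
      rw [hid]; exact fderiv_id
    have := h2 ▸ h1
    calc fderiv ℝ (g^[n]) (f^[n] x) (fderiv ℝ (f^[n]) x w)
        = ((fderiv ℝ (g^[n]) (f^[n] x)).comp (fderiv ℝ (f^[n]) x)) w := rfl
      _ = (ContinuousLinearMap.id ℝ (Euc d)) w := by rw [← this]
      _ = w := rfl
  -- lower bound: ‖D(f^[n])_x w‖ ≥ ‖w‖ / M₂ for x ∈ Λ
  have hlow : ∀ x ∈ Λ, ∀ w : Euc d, ‖w‖ ≤ M₂ * ‖fderiv ℝ (f^[n]) x w‖ := by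
    intro x hx w
    have hfx : f^[n] x ∈ Λ := hiter_inv ▸ Set.mem_image_of_mem _ hx
    calc ‖w‖ = ‖fderiv ℝ (g^[n]) (f^[n] x) (fderiv ℝ (f^[n]) x w)‖ := by rw [hchain]
      _ ≤ ‖fderiv ℝ (g^[n]) (f^[n] x)‖ * ‖fderiv ℝ (f^[n]) x w‖ :=
          (fderiv ℝ (g^[n]) (f^[n] x)).le_opNorm _
      _ ≤ M₂ * ‖fderiv ℝ (f^[n]) x w‖ :=
          mul_le_mul_of_nonneg_right (hM₂ _ hfx) (norm_nonneg _)
  -- the constant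
  refine ⟨min (1/3) (1 / (1 + 4 * M₁ * M₂)), lt_min (by norm_num) (by positivity), ?_⟩
  intro x hx u hu hu0 v hv hv0
  set A := fderiv ℝ (f^[n]) x with hA
  have hnu : (0:ℝ) < ‖u‖ := norm_pos_iff.mpr hu0
  have hnv : (0:ℝ) < ‖v‖ := norm_pos_iff.mpr hv0
  -- domination: ‖A u‖ ≤ (1/4) * ‖u‖ * ‖A v‖ / ‖v‖
  have hdom' : ‖A u‖ ≤ (1/4) * (‖u‖ * ‖A v‖ / ‖v‖) := by
    have h0 := hdom x hx n u hu hu0 v hv hv0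
    have hAv0 : (0:ℝ) ≤ ‖A v‖ / ‖v‖ := by positivity
    have h1 : ‖A u‖ / ‖u‖ ≤ (1/4) * (‖A v‖ / ‖v‖) :=
      h0.trans (mul_le_mul_of_nonneg_right hn hAv0)
    calc ‖A u‖ = (‖A u‖ / ‖u‖) * ‖u‖ := by field_simp
      _ ≤ ((1/4) * (‖A v‖ / ‖v‖)) * ‖u‖ := mul_le_mul_of_nonneg_right h1 hnu.le
      _ = (1/4) * (‖u‖ * ‖A v‖ / ‖v‖) := by ring
  rcases le_or_gt ‖u‖ (2 * ‖v‖) with hcase | hcase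
  · -- case ‖u‖ ≤ 2‖v‖
    have hAu : ‖A u‖ ≤ (1/2) * ‖A v‖ := by
      calc ‖A u‖ ≤ (1/4) * (‖u‖ * ‖A v‖ / ‖v‖) := hdom'
        _ ≤ (1/4) * (2 * ‖v‖ * ‖A v‖ / ‖v‖) := by gcongr
        _ = (1/2) * ‖A v‖ := by field_simp; ring
    have hAw : ‖A (u + v)‖ ≤ M₁ * ‖u + v‖ :=
      ((A.le_opNorm _).trans (mul_le_mul_of_nonneg_right (hM₁ x hx) (norm_nonneg _)))
    have hAv_le : ‖A v‖ ≤ 2 * (M₁ * ‖u + v‖) := by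
      have h1 : ‖A v‖ ≤ ‖A (u + v)‖ + ‖A u‖ := by
        have : A v = A (u + v) - A u := by rw [map_add]; abel
        rw [this]; exact norm_sub_le _ _
      have h2 : ‖A v‖ ≤ M₁ * ‖u + v‖ + (1/2) * ‖A v‖ :=
        h1.trans (add_le_add hAw hAu)
      linarith
    have hv_le : ‖v‖ ≤ 2 * M₁ * M₂ * ‖u + v‖ := by
      have := (hlow x hx v).trans (mul_le_mul_of_nonneg_left hAv_le hM₂0.le)
      linarith [this]
    have hu_le : ‖u‖ ≤ ‖u + v‖ + ‖v‖ := by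
      have : u = (u + v) - v := by abel
      rw [this]; simpa using norm_sub_le (u + v) v
    have hsum : ‖u‖ + ‖v‖ ≤ (1 + 4 * M₁ * M₂) * ‖u + v‖ := by nlinarith [norm_nonneg (u + v)]
    have hc2 : (0:ℝ) < 1 + 4 * M₁ * M₂ := by positivity
    calc min (1/3) (1 / (1 + 4 * M₁ * M₂)) * (‖u‖ + ‖v‖)
        ≤ (1 / (1 + 4 * M₁ * M₂)) * (‖u‖ + ‖v‖) :=
          mul_le_mul_of_nonneg_right (min_le_right _ _) (by positivity)
      _ ≤ (1 / (1 + 4 * M₁ * M₂)) * ((1 + 4 * M₁ * M₂) * ‖u + v‖) :=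
          mul_le_mul_of_nonneg_left hsum (by positivity)
      _ = ‖u + v‖ := by field_simp
  · -- case 2‖v‖ < ‖u‖
    have hge : ‖u‖ - ‖v‖ ≤ ‖u + v‖ := by
      have h1 : ‖u‖ ≤ ‖u + v‖ + ‖v‖ := by
        have h2 := norm_sub_le (u + v) v
        simpa using h2
      linarith
    calc min (1/3) (1 / (1 + 4 * M₁ * M₂)) * (‖u‖ + ‖v‖)
        ≤ (1/3) * (‖u‖ + ‖v‖) :=
          mul_le_mul_of_nonneg_right (min_le_left _ _) (by positivity)
      _ ≤ ‖u‖ - ‖v‖ := by linarith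
      _ ≤ ‖u + v‖ := hge
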